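/- Let X and Y be complete separable metric spaces, let p : X → Y be a Borel measurable map, and let μ, ν be Borel probability measures on X with ν absolutely continuous with respect to μ. Then the pushforward p_*ν is absolutely continuous with respect to p_*μ, and S_{N', p_*μ}(p_*ν) ≤ S_{N', μ}(ν) for every N' < 0. -/

import Mathlib

/-- A bundled mm-space: a complete separable metric space with a Borel probability measure. -/
structure MMSpace where
  X : Type
  [metric : MetricSpace X]
  [cpl : CompleteSpace X]
  [sep : TopologicalSpace.SeparableSpace X]
  [mble : MeasurableSpace X]
  [borel : BorelSpace X]
  μ : MeasureTheory.Measure X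
  [prob : MeasureTheory.IsProbabilityMeasure μ]

attribute [instance] MMSpace.metric MMSpace.cpl MMSpace.sep MMSpace.mble MMSpace.borel MMSpace.prob

open MeasureTheory ENNReal Filter Topology Set

noncomputable section

/-- A coupling of two measures on `X` is a measure on `X × X` whose marginals are the
given measures. -/
def IsCoupling {X : Type*} [MeasurableSpace X] (π : Measure (X × X)) (μ ν : Measure X) : Prop :=
  π.map Prod.fst = μ ∧ π.map Prod.snd = ν

/-- A measure has finite second moment if `∫ d(x,x₀)² dμ < ∞` for some base point. -/
def HasFiniteSecondMoment {X : Type*} [PseudoMetricSpace X] [MeasurableSpace X]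
    (μ : Measure X) : Prop :=
  ∃ x₀ : X, ∫⁻ x, ENNReal.ofReal (dist x x₀) ^ 2 ∂μ < ∞

/-- The square-root of the quadratic transport cost of a coupling. -/
def cost2 {X : Type*} [PseudoMetricSpace X] [MeasurableSpace X] (π : Measure (X × X)) : ℝ≥0∞ :=
  (∫⁻ p, ENNReal.ofReal (dist p.1 p.2) ^ 2 ∂π) ^ (1 / 2 : ℝ)

/-- The 2-Wasserstein distance (valued in `[0,∞]`). -/
def W2 {X : Type*} [PseudoMetricSpace X] [MeasurableSpace X] (μ ν : Measure X) : ℝ≥0∞ :=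
  ⨅ (π : Measure (X × X)) (_ : IsCoupling π μ ν), cost2 π

/-- A coupling is optimal if it attains the 2-Wasserstein distance. -/
def IsOptimalCoupling {X : Type*} [PseudoMetricSpace X] [MeasurableSpace X]
    (π : Measure (X × X)) (μ ν : Measure X) : Prop :=
  IsCoupling π μ ν ∧ cost2 π = W2 μ ν

open Classical in
/-- The Rényi entropy `S_{N',μ}(ν) = ∫ ρ^{1-1/N'} dμ` if `ν = ρμ ≪ μ`, and `∞` otherwise. -/
def renyiEntropy {X : Type*} [MeasurableSpace X] (N' : ℝ) (μ ν : Measure X) : ℝ≥0∞ :=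
  if ν ≪ μ then ∫⁻ x, (ν.rnDeriv μ x) ^ (1 - 1 / N') ∂μ else ∞

/-- Weak convergence of a sequence of measures: convergence of integrals of all bounded
continuous functions. -/
def WeakConv {X : Type*} [TopologicalSpace X] [MeasurableSpace X]
    (μs : ℕ → Measure X) (μ : Measure X) : Prop :=
  ∀ f : BoundedContinuousFunction X ℝ,
    Tendsto (fun n => ∫ x, f x ∂(μs n)) atTop (𝓝 (∫ x, f x ∂μ))

/-- Tightness of a sequence of measures. -/
def IsTightSeq {X : Type*} [TopologicalSpace X] [MeasurableSpace X]
    (μs : ℕ → Measure X) : Prop :=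
  ∀ ε : ℝ, 0 < ε → ∃ K : Set X, IsCompact K ∧ ∀ n, μs n Kᶜ < ENNReal.ofReal ε

/-- The function `s_κ`, with the convention `s_κ(0) = 1`. -/
def sKappa (κ θ : ℝ) : ℝ :=
  if θ = 0 then 1
  else if 0 < κ then Real.sin (Real.sqrt κ * θ) / (Real.sqrt κ * θ)
  else if κ < 0 then Real.sinh (Real.sqrt (-κ) * θ) / (Real.sqrt (-κ) * θ)
  else 1

/-- `ω_κ = π/√κ` for `κ > 0` and `∞` otherwise. -/
def omegaKappa (κ : ℝ) : ℝ≥0∞ :=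
  if 0 < κ then ENNReal.ofReal (Real.pi / Real.sqrt κ) else ∞

/-- The coefficient `τ_{K,N}^{(t)}(θ)`, valued in `[0,∞]`. -/
def tauCoeff (K N t θ : ℝ) : ℝ≥0∞ :=
  if ENNReal.ofReal θ < omegaKappa (K / (N - 1)) then
    ENNReal.ofReal (t * (sKappa (K / (N - 1)) (t * θ) / sKappa (K / (N - 1)) θ) ^ (1 - 1 / N))
  else ∞

/-- The coefficient `σ_κ^{(t)}(θ)`, valued in `[0,∞]`. -/
def sigmaCoeff (κ t θ : ℝ) : ℝ≥0∞ :=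
  if ENNReal.ofReal θ < omegaKappa κ then
    ENNReal.ofReal (t * sKappa κ (t * θ) / sKappa κ θ)
  else ∞

/-- The curvature-dimension condition `CD(K,N)` for `N < 0`, for a (probability) measure on a
metric space. -/
def IsCDSpace {X : Type*} [MetricSpace X] [MeasurableSpace X] (K N : ℝ) (μX : Measure X) : Prop :=
  ∀ ν₀ ν₁ : Measure X, IsProbabilityMeasure ν₀ → IsProbabilityMeasure ν₁ →
    ν₀ ≪ μX → ν₁ ≪ μX →
    HasFiniteSecondMoment ν₀ → HasFiniteSecondMoment ν₁ →
    renyiEntropy N μX ν₀ < ∞ → renyiEntropy N μX ν₁ < ∞ →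
    ∃ (νt : ℝ → Measure X) (π : Measure (X × X)),
      νt 0 = ν₀ ∧ νt 1 = ν₁ ∧
      (∀ s ∈ Icc (0:ℝ) 1, ∀ t ∈ Icc (0:ℝ) 1,
        W2 (νt s) (νt t) = ENNReal.ofReal |s - t| * W2 ν₀ ν₁) ∧
      IsOptimalCoupling π ν₀ ν₁ ∧
      (∀ t ∈ Icc (0:ℝ) 1, ∀ N' ∈ Ico N (0:ℝ),
        renyiEntropy N' μX ν₀ < ∞ → renyiEntropy N' μX ν₁ < ∞ →
        renyiEntropy N' μX (νt t) ≤
          (∫⁻ p, tauCoeff K N' (1 - t) (dist p.1 p.2) * (ν₀.rnDeriv μX p.1) ^ (-(1 / N')) ∂π)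
          + ∫⁻ p, tauCoeff K N' t (dist p.1 p.2) * (ν₁.rnDeriv μX p.2) ^ (-(1 / N')) ∂π)

/-- The reduced curvature-dimension condition `CD*(K,N)` for `N < 0`. -/
def IsCDStarSpace {X : Type*} [MetricSpace X] [MeasurableSpace X] (K N : ℝ)
    (μX : Measure X) : Prop :=
  ∀ ν₀ ν₁ : Measure X, IsProbabilityMeasure ν₀ → IsProbabilityMeasure ν₁ →
    ν₀ ≪ μX → ν₁ ≪ μX →
    HasFiniteSecondMoment ν₀ → HasFiniteSecondMoment ν₁ →
    renyiEntropy N μX ν₀ < ∞ → renyiEntropy N μX ν₁ < ∞ →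
    ∃ (νt : ℝ → Measure X) (π : Measure (X × X)),
      νt 0 = ν₀ ∧ νt 1 = ν₁ ∧
      (∀ s ∈ Icc (0:ℝ) 1, ∀ t ∈ Icc (0:ℝ) 1,
        W2 (νt s) (νt t) = ENNReal.ofReal |s - t| * W2 ν₀ ν₁) ∧
      IsOptimalCoupling π ν₀ ν₁ ∧
      (∀ t ∈ Icc (0:ℝ) 1, ∀ N' ∈ Ico N (0:ℝ),
        renyiEntropy N' μX ν₀ < ∞ → renyiEntropy N' μX ν₁ < ∞ →
        renyiEntropy N' μX (νt t) ≤
          (∫⁻ p, sigmaCoeff (K / N') (1 - t) (dist p.1 p.2)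
              * (ν₀.rnDeriv μX p.1) ^ (-(1 / N')) ∂π)
          + ∫⁻ p, sigmaCoeff (K / N') t (dist p.1 p.2)
              * (ν₁.rnDeriv μX p.2) ^ (-(1 / N')) ∂π)

/-- The conditioned (normalized restricted) measure `ν_B`. -/
def condProb {X : Type*} [MeasurableSpace X] (ν : Measure X) (B : Set X) : Measure X :=
  (ν B)⁻¹ • ν.restrict B

/-- Inverse hyperbolic cosine, `arcosh x = log (x + √(x²-1))`. -/
def acosh (x : ℝ) : ℝ := Real.log (x + Real.sqrt (x ^ 2 - 1))

/-- A parameter of an mm-space: a Borel map `[0,1) → X` pushing the Lebesgue measure to `μ`. -/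
def IsParameter (A : MMSpace) (φ : ℝ → A.X) : Prop :=
  Measurable φ ∧ Measure.map φ (volume.restrict (Ico (0:ℝ) 1)) = A.μ

/-- The Ky Fan distance between two measurable functions on `[0,1)`. -/
def kyFan (f g : ℝ → ℝ) : ℝ :=
  sInf {ε : ℝ | 0 ≤ ε ∧
    (volume.restrict (Ico (0:ℝ) 1)) {x | ε < |f x - g x|} ≤ ENNReal.ofReal ε}

/-- The pullback of the 1-Lipschitz functions on an mm-space by a parameter. -/
def pullLip (A : MMSpace) (φ : ℝ → A.X) : Set (ℝ → ℝ) :=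
  {h | ∃ f : A.X → ℝ, LipschitzWith 1 f ∧ h = f ∘ φ}

/-- The Hausdorff distance between two sets of functions with respect to the Ky Fan metric. -/
def hausdorffKF (A B : Set (ℝ → ℝ)) : ℝ :=
  max (⨆ f ∈ A, ⨅ g ∈ B, kyFan f g) (⨆ g ∈ B, ⨅ f ∈ A, kyFan f g)

/-- The observable distance between two mm-spaces. -/
def dconc (A B : MMSpace) : ℝ :=
  sInf {r : ℝ | ∃ φ ψ, IsParameter A φ ∧ IsParameter B ψ ∧
    r = hausdorffKF (pullLip A φ) (pullLip B ψ)}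

end

noncomputable section

/-- The smooth approximation `F_a(x) = a⁻¹ log(e^{ax} + e^{-ax})` of `|x|`. -/
def Fa (a x : ℝ) : ℝ := a⁻¹ * Real.log (Real.exp (a * x) + Real.exp (-(a * x)))

/-- A (minimizing, constant-speed) geodesic parametrized by `[0,1]`. -/
def IsGeodOn01 {X : Type*} [PseudoMetricSpace X] (γ : ℝ → X) : Prop :=
  ∀ s ∈ Set.Icc (0:ℝ) 1, ∀ s' ∈ Set.Icc (0:ℝ) 1,
    dist (γ s) (γ s') = |s - s'| * dist (γ 0) (γ 1)

end

open MeasureTheory Set in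
/-- Pushforwards preserve absolute continuity and do not increase the Rényi
entropy (`N' < 0`). -/
theorem renyiEntropy_map_le {X Y : Type*} [MetricSpace X] [CompleteSpace X]
    [TopologicalSpace.SeparableSpace X] [MeasurableSpace X] [BorelSpace X]
    [MetricSpace Y] [CompleteSpace Y] [TopologicalSpace.SeparableSpace Y]
    [MeasurableSpace Y] [BorelSpace Y]
    (p : X → Y) (hp : Measurable p)
    (μ ν : Measure X) [IsProbabilityMeasure μ] [IsProbabilityMeasure ν] (hac : ν ≪ μ) :
    ν.map p ≪ μ.map p ∧
      ∀ N' : ℝ, N' < 0 → renyiEntropy N' (μ.map p) (ν.map p) ≤ renyiEntropy N' μ ν := by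
  
  have hacp : ν.map p ≪ μ.map p := hac.map hp
  refine ⟨hacp, fun N' hN' => ?_⟩
  haveI : IsProbabilityMeasure (μ.map p) := Measure.isProbabilityMeasure_map hp.aemeasurable
  haveI : IsProbabilityMeasure (ν.map p) := Measure.isProbabilityMeasure_map hp.aemeasurable
  set q : ℝ := 1 - 1 / N' with hqdef
  have hq1 : 1 < q := by
    have : 1 / N' < 0 := by
      apply div_neg_of_pos_of_neg one_pos hN'
    simp only [hqdef]; linarith
  have hq0 : 0 < q := by linarith
  rw [renyiEntropy, renyiEntropy, if_pos hacp, if_pos hac]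
  set g := (ν.map p).rnDeriv (μ.map p) with hgdef
  set ρ := ν.rnDeriv μ with hρdef
  have hgm : Measurable g := Measure.measurable_rnDeriv _ _
  have hρm : Measurable ρ := Measure.measurable_rnDeriv _ _
  set B := ∫⁻ x, ρ x ^ q ∂μ with hBdef
  -- key identity
  have key : ∀ ψ : Y → ℝ≥0∞, Measurable ψ →
      ∫⁻ y, ψ y * g y ∂(μ.map p) = ∫⁻ x, ψ (p x) * ρ x ∂μ := by
    intro ψ hψ
    calc ∫⁻ y, ψ y * g y ∂(μ.map p)
        = ∫⁻ y, g y * ψ y ∂(μ.map p) := by simp_rw [mul_comm]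
      _ = ∫⁻ y, ψ y ∂((μ.map p).withDensity g) :=
          (lintegral_withDensity_eq_lintegral_mul _ hgm hψ).symm
      _ = ∫⁻ y, ψ y ∂(ν.map p) := by rw [Measure.withDensity_rnDeriv_eq _ _ hacp]
      _ = ∫⁻ x, ψ (p x) ∂ν := lintegral_map hψ hp
      _ = ∫⁻ x, ψ (p x) ∂(μ.withDensity ρ) := by rw [Measure.withDensity_rnDeriv_eq _ _ hac]
      _ = ∫⁻ x, ρ x * ψ (p x) ∂μ :=
          lintegral_withDensity_eq_lintegral_mul _ hρm (hψ.comp hp)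
      _ = ∫⁻ x, ψ (p x) * ρ x ∂μ := by simp_rw [mul_comm]
  set r : ℝ := q / (q - 1) with hrdef
  have hconj : q.HolderConjugate r := Real.HolderConjugate.conjExponent hq1
  have hqr : (q - 1) * r = q := by
    rw [hrdef, mul_comm, div_mul_cancel₀ _ (sub_ne_zero.mpr hq1.ne')]
  have hAle : ∀ n : ℕ, ∫⁻ y, min (g y) n ^ q ∂(μ.map p) ≤ B := by
    intro n
    set ψ : Y → ℝ≥0∞ := fun y => min (g y) n ^ (q - 1) with hψdef
    have hψm : Measurable ψ := (hgm.min measurable_const).pow_const _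
    set A := ∫⁻ y, min (g y) n ^ q ∂(μ.map p) with hAdef
    have hAfin : A ≠ ∞ := by
      have : A ≤ (n : ℝ≥0∞) ^ q * μ.map p univ := by
        rw [← lintegral_const]
        exact lintegral_mono fun y => ENNReal.rpow_le_rpow (min_le_right _ _) hq0.le
      refine (this.trans_lt ?_).ne
      simp only [measure_univ, mul_one]
      exact ENNReal.rpow_lt_top_of_nonneg hq0.le (by simp)
    by_cases hA0 : A = 0
    · rw [hA0]; exact zero_le
    have step1 : A ≤ ∫⁻ y, ψ y * g y ∂(μ.map p) := by
      refine lintegral_mono fun y => ?_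
      dsimp only
      have h1 : min (g y) n ^ q = ψ y * min (g y) n := by
        rcases eq_or_ne (min (g y) (n : ℝ≥0∞)) 0 with h | h
        · rw [h, ENNReal.zero_rpow_of_pos hq0, hψdef]
          simp [ENNReal.zero_rpow_of_pos (by linarith : (0:ℝ) < q - 1)]
        · have hne : min (g y) (n : ℝ≥0∞) ≠ ∞ := ((min_le_right _ _).trans_lt (by simp)).ne
          have hsum : (q - 1) + 1 = q := by ring
          rw [← hsum, ENNReal.rpow_add _ _ h hne, ENNReal.rpow_one]
      rw [h1]
      exact mul_le_mul_right (min_le_left _ _) _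
    have step2 : ∫⁻ y, ψ y * g y ∂(μ.map p) = ∫⁻ x, ψ (p x) * ρ x ∂μ := key ψ hψm
    have step3 : ∫⁻ x, ψ (p x) * ρ x ∂μ ≤ A ^ (1 / r) * B ^ (1 / q) := by
      have h := ENNReal.lintegral_mul_le_Lp_mul_Lq μ hconj.symm
        ((hψm.comp hp).aemeasurable) (hρm.aemeasurable)
      have hpow : ∫⁻ x, ψ (p x) ^ r ∂μ = A := by
        have : ∀ x, ψ (p x) ^ r = min (g (p x)) n ^ q := by
          intro x
          rw [hψdef, ← ENNReal.rpow_mul, hqr]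
        simp_rw [this]
        rw [hAdef, lintegral_map ((hgm.min measurable_const).pow_const _) hp]
      calc ∫⁻ x, ψ (p x) * ρ x ∂μ = ∫⁻ x, ((fun x => ψ (p x)) * ρ) x ∂μ := rfl
        _ ≤ (∫⁻ x, ψ (p x) ^ r ∂μ) ^ (1 / r) * (∫⁻ x, ρ x ^ q ∂μ) ^ (1 / q) := h
        _ = A ^ (1 / r) * B ^ (1 / q) := by rw [hpow]
    have hAB : A ≤ A ^ (1 / r) * B ^ (1 / q) := step1.trans (step2.le.trans step3)
    have hsum : 1 / r + 1 / q = 1 := by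
      have := hconj.symm.inv_add_inv_eq_one
      simpa [one_div] using this
    have hA' : A ^ (1 / r) * A ^ (1 / q) ≤ A ^ (1 / r) * B ^ (1 / q) := by
      calc A ^ (1 / r) * A ^ (1 / q) = A ^ (1 / r + 1 / q) := (ENNReal.rpow_add _ _ hA0 hAfin).symm
        _ = A := by rw [hsum, ENNReal.rpow_one]
        _ ≤ _ := hAB
    have hcancel : A ^ (1 / q) ≤ B ^ (1 / q) := by
      have h0 : A ^ (1 / r) ≠ 0 := by
        simp [ENNReal.rpow_eq_zero_iff, hA0, hAfin, hconj.symm.pos, hconj.symm.pos.ne',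
          one_div_pos.mpr hconj.symm.pos]
      have hT : A ^ (1 / r) ≠ ∞ := by
        simp [ENNReal.rpow_eq_top_iff, hA0, hAfin, one_div_pos.mpr hconj.symm.pos,
          (one_div_pos.mpr hconj.symm.pos).not_gt]
      exact (ENNReal.mul_le_mul_iff_right h0 hT).mp hA'
    have := ENNReal.rpow_le_rpow hcancel hq0.le
    rwa [← ENNReal.rpow_mul, ← ENNReal.rpow_mul, one_div,
      inv_mul_cancel₀ hq0.ne', ENNReal.rpow_one, ENNReal.rpow_one] at this
  -- monotone convergence
  have hsup : ∀ y, ⨆ n : ℕ, min (g y) n ^ q = g y ^ q := by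
    intro y
    have h1 : ⨆ n : ℕ, min (g y) (n : ℝ≥0∞) = g y := by
      rw [← inf_iSup_eq]
      simp [iSup_natCast]
    calc ⨆ n : ℕ, min (g y) n ^ q = ⨆ n : ℕ, ENNReal.orderIsoRpow q hq0 (min (g y) n) := rfl
      _ = ENNReal.orderIsoRpow q hq0 (⨆ n : ℕ, min (g y) n) := (OrderIso.map_iSup _ _).symm
      _ = g y ^ q := by rw [h1]; rfl
  have hmono : Monotone fun (n : ℕ) (y : Y) => min (g y) n ^ q := by
    intro m n hmn y
    exact ENNReal.rpow_le_rpow (min_le_min le_rfl (by exact_mod_cast Nat.cast_le.mpr hmn)) hq0.le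
  calc ∫⁻ y, g y ^ q ∂(μ.map p) = ∫⁻ y, ⨆ n : ℕ, min (g y) n ^ q ∂(μ.map p) := by
        simp_rw [hsup]
    _ = ⨆ n : ℕ, ∫⁻ y, min (g y) n ^ q ∂(μ.map p) :=
        lintegral_iSup (fun n => (hgm.min measurable_const).pow_const _) hmono
    _ ≤ B := iSup_le hAle
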